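/- Let k_a > 1, ℓ > 0, and let k_v, k_p, h_w, τ₀ be positive real numbers with γ := k_v + h_w k_p satisfying γ − τ₀ k_p > 0. Then there exist ω > 0 and τ ∈ (0, τ₀] such that |−k_a ω² e^{−iωℓ} + i k_v ω + k_p| > |−iτω³ − ω² + iγω + k_p|. -/

import Mathlib

theorem string_stability_fails_ka_gt_one (ka ℓ kv kp hw τ₀ : ℝ)
    (hka : ka > 1) (hℓ : 0 < ℓ) (hkv : 0 < kv) (hkp : 0 < kp) (hhw : 0 < hw) (hτ₀ : 0 < τ₀)
    (γ : ℝ) (hγ : γ = kv + hw * kp) (hint : γ - τ₀ * kp > 0) :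
    ∃ ω : ℝ, 0 < ω ∧ ∃ τ : ℝ, 0 < τ ∧ τ ≤ τ₀ ∧
      ‖-(ka : ℂ) * (ω : ℂ)^2 * Complex.exp (-(Complex.I * (ω : ℂ) * (ℓ : ℂ)))
          + Complex.I * (kv : ℂ) * (ω : ℂ) + (kp : ℂ)‖
        > ‖-(Complex.I * (τ : ℂ) * (ω : ℂ)^3) - (ω : ℂ)^2
          + Complex.I * (γ : ℂ) * (ω : ℂ) + (kp : ℂ)‖ := by
  have hγpos : 0 < γ := by rw [hγ]; positivity
  have hka1 : 0 < ka - 1 := by linarith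
  obtain ⟨ω, hωdef⟩ : ∃ x : ℝ, x = (kv + γ + 2*kp + τ₀)/(ka-1) + 1 := ⟨_, rfl⟩
  have hω1 : 1 ≤ ω := by
    have h0 : 0 ≤ (kv + γ + 2*kp + τ₀)/(ka-1) := by positivity
    rw [hωdef]; linarith
  have hωpos : 0 < ω := by linarith
  have hω3pos : (0:ℝ) < ω^3 := by positivity
  have hω3 : (1:ℝ) ≤ ω^3 := one_le_pow₀ hω1
  obtain ⟨τ, hτdef⟩ : ∃ x : ℝ, x = τ₀ / ω^3 := ⟨_, rfl⟩
  have hτpos : 0 < τ := by rw [hτdef]; positivity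
  have hτω : τ * ω^3 = τ₀ := by rw [hτdef]; exact div_mul_cancel₀ τ₀ (ne_of_gt hω3pos)
  refine ⟨ω, hωpos, τ, hτpos, ?_, ?_⟩
  · rw [hτdef, div_le_iff₀ hω3pos]; nlinarith
  · -- |A| = ka * ω²
    have hkey : ω^2 + kp + (γ*ω + τ₀) < ka * ω^2 - (kv * ω + kp) := by
      have hgt : (ka - 1) * ω > kv + γ + 2*kp + τ₀ := by
        have hmd : (ka - 1) * ((kv + γ + 2*kp + τ₀)/(ka-1)) = kv + γ + 2*kp + τ₀ := by
          field_simp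
        rw [hωdef, mul_add, mul_one, hmd]
        linarith
      have h2 := mul_lt_mul_of_pos_right hgt hωpos
      have h3 : (2*kp+τ₀) ≤ (2*kp+τ₀)*ω := le_mul_of_one_le_right (by linarith) hω1
      nlinarith [h2, h3]
    have hkapos : (0:ℝ) < ka := lt_trans one_pos hka
    have hA : ‖-(ka : ℂ) * (ω : ℂ)^2 * Complex.exp (-(Complex.I * (ω : ℂ) * (ℓ : ℂ)))‖
        = ka * ω^2 := by
      rw [norm_mul, norm_mul, Complex.norm_exp]
      have hre : (-(Complex.I * (ω : ℂ) * (ℓ : ℂ))).re = 0 := by simp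
      rw [hre, Real.exp_zero]
      rw [norm_neg]
      simp [Complex.norm_real, ← Complex.ofReal_pow, abs_of_pos hkapos,
        abs_of_pos (pow_pos hωpos 2)]
    -- |B| ≤ kv ω + kp
    have hB : ‖Complex.I * (kv : ℂ) * (ω : ℂ) + (kp : ℂ)‖ ≤ kv * ω + kp := by
      refine le_trans (norm_add_le _ _) ?_
      rw [norm_mul, norm_mul]
      simp [abs_of_pos hkv, abs_of_pos hωpos, abs_of_pos hkp]
    set A : ℂ := -(ka : ℂ) * (ω : ℂ)^2 * Complex.exp (-(Complex.I * (ω : ℂ) * (ℓ : ℂ))) with hAdef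
    set B : ℂ := Complex.I * (kv : ℂ) * (ω : ℂ) + (kp : ℂ) with hBdef
    clear_value A B
    have hLHS : ka * ω^2 - (kv * ω + kp) ≤ ‖A + B‖ := by
      have h1 : ‖A‖ ≤ ‖A + B‖ + ‖B‖ := by
        calc ‖A‖ = ‖(A + B) + (-B)‖ := by congr 1; ring
          _ ≤ ‖A + B‖ + ‖-B‖ := norm_add_le _ _
          _ = ‖A + B‖ + ‖B‖ := by rw [norm_neg]
      rw [hA] at h1
      linarith
    -- upper bound for RHS
    set z : ℂ := -(Complex.I * (τ : ℂ) * (ω : ℂ)^3) - (ω : ℂ)^2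
          + Complex.I * (γ : ℂ) * (ω : ℂ) + (kp : ℂ) with hzdef
    clear_value z
    have hzre : z.re = kp - ω^2 := by
      simp [hzdef, ← Complex.ofReal_pow]; ring
    have hzim : z.im = γ * ω - τ₀ := by
      simp [hzdef, ← Complex.ofReal_pow]
      linarith [hτω]
    have hRHS : ‖z‖ ≤ |kp - ω^2| + |γ * ω - τ₀| := by
      have := Complex.norm_le_abs_re_add_abs_im z
      rwa [hzre, hzim] at this
    have hbound : |kp - ω^2| + |γ * ω - τ₀| ≤ ω^2 + kp + (γ*ω + τ₀) := by
      have hγω : (0:ℝ) ≤ γ * ω := by positivity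
      have hω2 : (0:ℝ) ≤ ω^2 := by positivity
      have h1 : |kp - ω^2| ≤ ω^2 + kp := abs_le.mpr ⟨by linarith, by linarith⟩
      have h2 : |γ * ω - τ₀| ≤ γ*ω + τ₀ := abs_le.mpr ⟨by linarith, by linarith⟩
      linarith
    have hassoc : A + Complex.I * (kv : ℂ) * (ω : ℂ) + (kp : ℂ) = A + B := by
      rw [hBdef]; ring
    rw [hassoc]
    calc ‖z‖ ≤ ω^2 + kp + (γ*ω + τ₀) := le_trans hRHS hbound
      _ < ka * ω^2 - (kv * ω + kp) := hkey
      _ ≤ ‖A + B‖ := hLHS
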